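/- With χ(γ) = q_1 + q_2 γ (i.e., M = 2), q_1, q_2 ≥ 0 not both zero, and τ ≥ 1, the function f(γ) = γ χ(γ) e^{-γ} / (e^{-γ} + τ(1 - e^{-γ})) is unimodal on [0, ∞). -/

import Mathlib

open Real Set

private noncomputable def Ffun (q1 q2 τ : ℝ) : ℝ → ℝ :=
  fun γ => γ * (q1 + q2 * γ) / (1 + τ * (Real.exp γ - 1))

private noncomputable def psi (q1 q2 τ : ℝ) : ℝ → ℝ :=
  fun γ => (q1 + 2*q2*γ) * ((1-τ) * Real.exp (-γ) + τ) - τ * γ * (q1 + q2 * γ)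

private lemma Ffun_eq (q1 q2 τ : ℝ) (γ : ℝ) :
    γ * (q1 + q2 * γ) * Real.exp (-γ) /
      (Real.exp (-γ) + τ * (1 - Real.exp (-γ))) = Ffun q1 q2 τ γ := by
  have hE : (Real.exp γ)⁻¹ ≠ 0 := inv_ne_zero (Real.exp_ne_zero γ)
  have h1 : γ * (q1 + q2 * γ) * Real.exp (-γ) = (Real.exp γ)⁻¹ * (γ * (q1 + q2 * γ)) := by
    rw [Real.exp_neg]; ring
  have h2 : Real.exp (-γ) + τ * (1 - Real.exp (-γ))
      = (Real.exp γ)⁻¹ * (1 + τ * (Real.exp γ - 1)) := by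
    rw [Real.exp_neg]
    field_simp
  rw [h1, h2, Ffun, mul_div_mul_left _ _ hE]

private lemma Ffun_hasDerivAt (q1 q2 τ : ℝ) (γ : ℝ) (hE : (1 + τ * (Real.exp γ - 1)) ≠ 0) :
    HasDerivAt (Ffun q1 q2 τ)
      (((q1 + 2*q2*γ) * (1 + τ * (Real.exp γ - 1)) - γ * (q1 + q2 * γ) * (τ * Real.exp γ)) /
        (1 + τ * (Real.exp γ - 1))^2) γ := by
  have h1 : HasDerivAt (fun x : ℝ => x * (q1 + q2 * x)) (q1 + 2*q2*γ) γ := by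
    have := (hasDerivAt_id γ).mul (((hasDerivAt_id γ).const_mul q2).const_add q1)
    simp only [id_eq] at this
    exact this.congr_deriv (by ring)
  have h2 : HasDerivAt (fun x : ℝ => 1 + τ * (Real.exp x - 1)) (τ * Real.exp γ) γ := by
    simpa using (((Real.hasDerivAt_exp γ).sub_const 1).const_mul τ).const_add 1
  exact h1.div h2 hE

private lemma psi_hasDerivAt (q1 q2 τ : ℝ) (γ : ℝ) :
    HasDerivAt (psi q1 q2 τ) ((2*q2 - q1 - 2*q2*γ) * (τ - (τ-1) * Real.exp (-γ))) γ := by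
  have hexp : HasDerivAt (fun x : ℝ => Real.exp (-x)) (-Real.exp (-γ)) γ := by
    exact ((Real.hasDerivAt_exp (-γ)).comp γ (hasDerivAt_neg γ)).congr_deriv (by ring)
  have h1 : HasDerivAt (fun x : ℝ => q1 + 2*q2*x) (2*q2) γ := by
    simpa using ((hasDerivAt_id γ).const_mul (2*q2)).const_add q1
  have h2 : HasDerivAt (fun x : ℝ => (1-τ) * Real.exp (-x) + τ) (-(1-τ) * Real.exp (-γ)) γ := by
    have := (hexp.const_mul (1-τ)).add_const τ
    exact this.congr_deriv (by ring)
  have h3 : HasDerivAt (fun x : ℝ => τ * x * (q1 + q2 * x))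
      (τ * (q1 + 2*q2*γ)) γ := by
    have := (((hasDerivAt_id γ).const_mul τ)).mul (((hasDerivAt_id γ).const_mul q2).const_add q1)
    simp only [id_eq] at this
    exact this.congr_deriv (by ring)
  have := (h1.mul h2).sub h3
  exact this.congr_deriv (by ring)

private lemma psi_deriv (q1 q2 τ : ℝ) (γ : ℝ) :
    deriv (psi q1 q2 τ) γ = (2*q2 - q1 - 2*q2*γ) * (τ - (τ-1) * Real.exp (-γ)) :=
  (psi_hasDerivAt q1 q2 τ γ).deriv

theorem stmt_5 (q1 q2 τ : ℝ)
    (hq1 : 0 ≤ q1) (hq2 : 0 ≤ q2) (hq : q1 ≠ 0 ∨ q2 ≠ 0) (hτ : 1 ≤ τ) :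
    ∃ γs : ℝ, 0 ≤ γs ∧
      MonotoneOn
        (fun γ : ℝ =>
          γ * (q1 + q2 * γ) * Real.exp (-γ) /
            (Real.exp (-γ) + τ * (1 - Real.exp (-γ))))
        (Set.Icc 0 γs) ∧
      AntitoneOn
        (fun γ : ℝ =>
          γ * (q1 + q2 * γ) * Real.exp (-γ) /
            (Real.exp (-γ) + τ * (1 - Real.exp (-γ))))
        (Set.Ici γs) := by
  have hfe : (fun γ : ℝ =>
      γ * (q1 + q2 * γ) * Real.exp (-γ) /
        (Real.exp (-γ) + τ * (1 - Real.exp (-γ)))) = Ffun q1 q2 τ :=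
    funext (Ffun_eq q1 q2 τ)
  -- positivity of the denominator for γ ≥ 0
  have hEpos : ∀ γ : ℝ, 0 ≤ γ → 0 < 1 + τ * (Real.exp γ - 1) := by
    intro γ hγ
    have h1 : 1 ≤ Real.exp γ := Real.one_le_exp hγ
    nlinarith
  -- positivity of the second factor of ψ'
  have hDpos : ∀ γ : ℝ, 0 ≤ γ → 0 < τ - (τ-1) * Real.exp (-γ) := by
    intro γ hγ
    have h1 : Real.exp (-γ) ≤ 1 := Real.exp_le_one_iff.mpr (by linarith)
    have h2 : 0 < Real.exp (-γ) := Real.exp_pos _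
    nlinarith
  set c : ℝ := max 0 ((2*q2 - q1) / (2*q2)) with hc
  have hc0 : 0 ≤ c := le_max_left _ _
  have hψdiff : ∀ γ : ℝ, DifferentiableAt ℝ (psi q1 q2 τ) γ :=
    fun γ => (psi_hasDerivAt q1 q2 τ γ).differentiableAt
  -- ψ monotone on [0,c]
  have hmono : MonotoneOn (psi q1 q2 τ) (Icc 0 c) := by
    apply monotoneOn_of_deriv_nonneg (convex_Icc 0 c)
      (Continuous.continuousOn (by
        have : Differentiable ℝ (psi q1 q2 τ) := fun γ => hψdiff γ
        exact this.continuous))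
      (fun γ _ => (hψdiff γ).differentiableWithinAt)
    intro γ hγ
    rw [interior_Icc] at hγ
    rw [psi_deriv]
    apply mul_nonneg _ (le_of_lt (hDpos γ (le_of_lt hγ.1)))
    -- γ < c, so c > 0, so q2 ≠ 0 and c = (2q2-q1)/(2q2)
    have hcpos : 0 < c := lt_of_le_of_lt (le_of_lt hγ.1) hγ.2
    have hq2pos : 0 < q2 := by
      rcases lt_or_eq_of_le hq2 with h | h
      · exact h
      · exfalso
        rw [hc, ← h] at hcpos
        simp at hcpos
    have hcle : c ≤ (2*q2 - q1) / (2*q2) := by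
      rw [hc]
      apply max_le _ le_rfl
      by_contra hcon
      push_neg at hcon
      rw [hc] at hcpos
      rw [max_eq_left (le_of_lt hcon)] at hcpos
      exact lt_irrefl _ hcpos
    have : γ ≤ (2*q2 - q1) / (2*q2) := le_trans (le_of_lt hγ.2) hcle
    rw [le_div_iff₀ (by linarith)] at this
    nlinarith
  -- ψ antitone on [c,∞)
  have hanti : AntitoneOn (psi q1 q2 τ) (Ici c) := by
    apply antitoneOn_of_deriv_nonpos (convex_Ici c)
      (Continuous.continuousOn (by
        have : Differentiable ℝ (psi q1 q2 τ) := fun γ => hψdiff γ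
        exact this.continuous))
      (fun γ _ => (hψdiff γ).differentiableWithinAt)
    intro γ hγ
    rw [interior_Ici] at hγ
    rw [psi_deriv]
    have hγ0 : 0 ≤ γ := le_of_lt (lt_of_le_of_lt hc0 hγ)
    apply mul_nonpos_of_nonpos_of_nonneg _ (le_of_lt (hDpos γ hγ0))
    rcases lt_or_eq_of_le hq2 with h | h
    · have h1 : (2*q2 - q1) / (2*q2) ≤ c := le_max_right _ _
      have : (2*q2 - q1) / (2*q2) < γ := lt_of_le_of_lt h1 hγ
      rw [div_lt_iff₀ (by linarith)] at this
      nlinarith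
    · nlinarith
  have hψ0 : psi q1 q2 τ 0 = q1 := by
    simp [psi]
  -- ψ is negative beyond 3
  have hq12 : 0 < q1 + q2 := by
    rcases hq with h | h
    · have := lt_of_le_of_ne hq1 (Ne.symm h); linarith
    · have := lt_of_le_of_ne hq2 (Ne.symm h); linarith
  have h3 : ∀ γ : ℝ, 3 ≤ γ → psi q1 q2 τ γ < 0 := by
    intro γ hγ
    have he1 : Real.exp (-γ) ≤ 1 := Real.exp_le_one_iff.mpr (by linarith)
    have he0 : 0 < Real.exp (-γ) := Real.exp_pos _
    have hterm : (q1 + 2*q2*γ) * ((1-τ) * Real.exp (-γ)) ≤ 0 := by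
      apply mul_nonpos_of_nonneg_of_nonpos
      · nlinarith
      · nlinarith
    have key : psi q1 q2 τ γ ≤ τ * (q1 * (1-γ) + q2 * γ * (2-γ)) := by
      simp only [psi]
      nlinarith
    have h1 : q1 * (1-γ) ≤ -2 * q1 := by nlinarith
    have h2 : q2 * γ * (2-γ) ≤ -3 * q2 := by nlinarith [mul_nonneg hq2 (show (0:ℝ) ≤ (γ-3)*(γ+1) by nlinarith)]
    nlinarith
  -- the set where ψ ≥ 0
  set S : Set ℝ := {γ : ℝ | 0 ≤ γ ∧ 0 ≤ psi q1 q2 τ γ} with hS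
  have h0S : (0:ℝ) ∈ S := ⟨le_rfl, by rw [hψ0]; exact hq1⟩
  have hbdd : BddAbove S := by
    refine ⟨3, fun γ hγ => ?_⟩
    by_contra hcon
    push_neg at hcon
    exact absurd hγ.2 (not_le.mpr (h3 γ (le_of_lt hcon)))
  set γs : ℝ := sSup S with hγsdef
  have hγs0 : 0 ≤ γs := le_csSup hbdd h0S
  -- ψ ≥ 0 on [0, γs)
  have claimA : ∀ γ : ℝ, 0 ≤ γ → γ < γs → 0 ≤ psi q1 q2 τ γ := by
    intro γ hγ0 hγlt
    by_cases hγc : γ ≤ c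
    · have := hmono (left_mem_Icc.mpr hc0) ⟨hγ0, hγc⟩ hγ0
      rw [hψ0] at this
      linarith
    · push_neg at hγc
      obtain ⟨s, hsS, hgs⟩ := exists_lt_of_lt_csSup ⟨0, h0S⟩ hγlt
      have := hanti (le_of_lt hγc) (le_trans (le_of_lt hγc) (le_of_lt hgs)) (le_of_lt hgs)
      exact le_trans hsS.2 this
  -- ψ < 0 on (γs, ∞)
  have claimB : ∀ γ : ℝ, γs < γ → psi q1 q2 τ γ < 0 := by
    intro γ hγ
    by_contra hcon
    push_neg at hcon
    have : γ ∈ S := ⟨le_trans hγs0 (le_of_lt hγ), hcon⟩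
    exact absurd (le_csSup hbdd this) (not_le.mpr hγ)
  -- numerator of F' equals exp γ * ψ γ
  have hnum : ∀ γ : ℝ,
      (q1 + 2*q2*γ) * (1 + τ * (Real.exp γ - 1)) - γ * (q1 + q2 * γ) * (τ * Real.exp γ)
        = Real.exp γ * psi q1 q2 τ γ := by
    intro γ
    have h := Real.exp_neg γ
    simp only [psi]
    rw [h]
    have hne : Real.exp γ ≠ 0 := Real.exp_ne_zero γ
    field_simp
    ring
  refine ⟨γs, hγs0, ?_, ?_⟩
  · rw [hfe]
    apply monotoneOn_of_deriv_nonneg (convex_Icc 0 γs)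
    · apply ContinuousOn.div (by fun_prop) (by fun_prop)
      intro γ hγ
      exact ne_of_gt (hEpos γ hγ.1)
    · intro γ hγ
      rw [interior_Icc] at hγ
      exact (Ffun_hasDerivAt q1 q2 τ γ (ne_of_gt (hEpos γ (le_of_lt hγ.1)))).differentiableAt.differentiableWithinAt
    · intro γ hγ
      rw [interior_Icc] at hγ
      rw [(Ffun_hasDerivAt q1 q2 τ γ (ne_of_gt (hEpos γ (le_of_lt hγ.1)))).deriv, hnum]
      apply div_nonneg _ (sq_nonneg _)
      exact mul_nonneg (le_of_lt (Real.exp_pos γ)) (claimA γ (le_of_lt hγ.1) hγ.2)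
  · rw [hfe]
    apply antitoneOn_of_deriv_nonpos (convex_Ici γs)
    · apply ContinuousOn.div (by fun_prop) (by fun_prop)
      intro γ hγ
      exact ne_of_gt (hEpos γ (le_trans hγs0 hγ))
    · intro γ hγ
      rw [interior_Ici] at hγ
      exact (Ffun_hasDerivAt q1 q2 τ γ (ne_of_gt (hEpos γ (le_trans hγs0 (le_of_lt hγ))))).differentiableAt.differentiableWithinAt
    · intro γ hγ
      rw [interior_Ici] at hγ
      rw [(Ffun_hasDerivAt q1 q2 τ γ (ne_of_gt (hEpos γ (le_trans hγs0 (le_of_lt hγ))))).deriv, hnum]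
      apply div_nonpos_of_nonpos_of_nonneg _ (sq_nonneg _)
      exact mul_nonpos_of_nonneg_of_nonpos (le_of_lt (Real.exp_pos γ)) (le_of_lt (claimB γ hγ))
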